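/- Let F^λ[G] be a twisted group algebra of characteristic p > 0 with F^λ[G]^[2] nil, and suppose a, b ∈ G. Then the group commutator (a,b) is a p-element of G: there exists m such that (a,b)^{p^m} = 1. -/

import Mathlib

/-- Additive subgroup generated by products `s * t` with `s ∈ S`, `t ∈ T`. -/
def aprod {R : Type*} [NonUnitalRing R] (S T : AddSubgroup R) : AddSubgroup R :=
  AddSubgroup.closure {x : R | ∃ s ∈ S, ∃ t ∈ T, x = s * t}

/-- Additive subgroup generated by Lie commutators `s*t - t*s`. -/
def lbrk {R : Type*} [NonUnitalRing R] (S T : AddSubgroup R) : AddSubgroup R :=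
  AddSubgroup.closure {x : R | ∃ s ∈ S, ∃ t ∈ T, x = s * t - t * s}

/-- The lower Lie central series `γ₁(R) = R`, `γₙ(R) = [γₙ₋₁(R), R]`. -/
def lieGamma (R : Type*) [NonUnitalRing R] : ℕ → AddSubgroup R
  | 0 => ⊤
  | 1 => ⊤
  | n + 2 => lbrk (lieGamma R (n + 1)) ⊤

/-- The `n`-th lower Lie power `R^[n] = γₙ(R)·R`. -/
def lowerLiePow (R : Type*) [NonUnitalRing R] (n : ℕ) : AddSubgroup R :=
  aprod (lieGamma R n) ⊤

lemma mem_llp2 {R : Type*} [Ring R] (s t u : R) :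
    (s * t - t * s) * u ∈ lowerLiePow R 2 := by
  apply AddSubgroup.subset_closure
  refine ⟨s * t - t * s, ?_, u, trivial, rfl⟩
  show _ ∈ lbrk (lieGamma R 1) ⊤
  exact AddSubgroup.subset_closure ⟨s, trivial, t, trivial, rfl⟩

/-- In a twisted group algebra of characteristic `p > 0` with nil commutator
ideal, every group commutator `(a,b) = a⁻¹b⁻¹ab` is a `p`-element of `G`. -/
theorem stmt_16 {F : Type*} [Field F] {G : Type*} [Group G]
    {A : Type*} [Ring A] [Algebra F A]
    (l : G → G → Fˣ) (B : Module.Basis G F A)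
    (hone : B 1 = 1)
    (hmul : ∀ g h : G, B g * B h = ((l g h : F)) • B (g * h))
    (hcoc : ∀ a b c : G, l a (b * c) * l b c = l (a * b) c * l a b)
    (hnorm : ∀ g : G, l g 1 = 1 ∧ l 1 g = 1)
    (p : ℕ) [Fact p.Prime] [CharP F p]
    (hnil : ∀ x ∈ lowerLiePow A 2, IsNilpotent x) :
    ∀ a b : G, ∃ m : ℕ, (a⁻¹ * b⁻¹ * a * b) ^ p ^ m = 1 := by
  intro a b
  haveI : Nontrivial A := nontrivial_of_ne (B 1) 0 (B.ne_zero 1)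
  haveI : CharP A p := charP_of_injective_algebraMap (algebraMap F A).injective p
  -- powers of basis elements
  have hpow : ∀ (g : G) (n : ℕ), ∃ u : Fˣ, (B g) ^ n = (u : F) • B (g ^ n) := by
    intro g n
    induction n with
    | zero => exact ⟨1, by simp [hone]⟩
    | succ n ih =>
      obtain ⟨u, hu⟩ := ih
      refine ⟨u * l (g ^ n) g, ?_⟩
      rw [pow_succ, hu, smul_mul_assoc, hmul, smul_smul, pow_succ]
      push_cast
      ring_nf
  set e : G := a * b * (b * a)⁻¹ with he
  set x : A := (B b * B a - B a * B b) * B ((b * a)⁻¹) with hxdef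
  set α : Fˣ := l b a * l (b * a) (b * a)⁻¹ with hα
  set β : Fˣ := l a b * l (a * b) (b * a)⁻¹ with hβ
  have hxval : x = (α : F) • (1 : A) - (β : F) • B e := by
    rw [hxdef, sub_mul, hmul, hmul, smul_mul_assoc, smul_mul_assoc, hmul, hmul,
      smul_smul, smul_smul, mul_inv_cancel, hone]
    push_cast
    rfl
  obtain ⟨n, hn⟩ := hnil x (mem_llp2 (B b) (B a) (B ((b * a)⁻¹)))
  have hq : x ^ p ^ n = 0 := by
    apply pow_eq_zero_of_le _ hn
    calc n ≤ 2 ^ n := Nat.le_of_lt (Nat.lt_two_pow_self (n := n))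
    _ ≤ p ^ n := Nat.pow_le_pow_left (Fact.out (p := p.Prime)).two_le n
  -- main computation
  obtain ⟨γ, hγ⟩ := hpow e (p ^ n)
  have key : ((β : F) ^ p ^ n * (γ : F)) • B (e ^ p ^ n) = ((α : F) ^ p ^ n) • (1 : A) := by
    have hc : Commute ((α : F) • (1 : A)) x := (Commute.one_left x).smul_left _
    have h1 : ((β : F) • B e) ^ p ^ n = ((α : F) • (1 : A) - x) ^ p ^ n := by
      rw [hxval, sub_sub_cancel]
    rw [sub_pow_char_pow_of_commute p n hc, hq, sub_zero, smul_pow, smul_pow, one_pow,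
      hγ, smul_smul] at h1
    rw [h1]
  rw [← hone] at key
  have hrepr := congrArg B.repr key
  rw [map_smul, map_smul, B.repr_self, B.repr_self] at hrepr
  rw [Finsupp.smul_single, Finsupp.smul_single, smul_eq_mul, smul_eq_mul, mul_one, mul_one]
    at hrepr
  have hne : (β : F) ^ p ^ n * (γ : F) ≠ 0 := by
    exact mul_ne_zero (pow_ne_zero _ (Units.ne_zero β)) (Units.ne_zero γ)
  have heq1 : e ^ p ^ n = 1 := by
    rcases (Finsupp.single_eq_single_iff _ _ _ _).mp hrepr with ⟨h, _⟩ | ⟨h, _⟩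
    · exact h
    · exact absurd h hne
  refine ⟨n, ?_⟩
  have hc : a⁻¹ * b⁻¹ * a * b = (a * b)⁻¹ * e * ((a * b)⁻¹)⁻¹ := by
    rw [he]; group
  rw [hc, conj_pow, heq1, mul_one, inv_inv, inv_mul_cancel]
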